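/- (Local gradient lower bound, noiseless case) Let x_⋆ ∈ ℝ^p, K satisfy the kernel assumption, a_1, …, a_n ∈ ℝ^p be fixed vectors, and b_i = (a_iᵀx_⋆)². Suppose there exist ρ > 0 and λ_s > 0 such that F_δ(y) − F_δ(x) ≥ ∇F_δ(x)ᵀ(y−x) − (ρ/2)‖y−x‖₂² for all x, y ∈ ℝ^p, and F_δ(x) − F_δ(x_⋆) ≥ λ_s·min{Δ(x), Δ(x)²/δ} for all x ∈ ℝ^p. Then for every δ ∈ (0, λ_s/ρ] and every x with ‖x − x_⋆‖₂ ≤ λ_s/ρ, ∇F_δ(x)ᵀ(x − x_⋆) ≥ (λ_s/2)·min{Δ(x), Δ(x)²/δ}; likewise for every x with ‖x + x_⋆‖₂ ≤ λ_s/ρ, ∇F_δ(x)ᵀ(x + x_⋆) ≥ (λ_s/2)·min{Δ(x), Δ(x)²/δ}. Consequently, ∇F_δ(x) ≠ 0 for every x with 0 < Δ(x) ≤ λ_s/ρ. -/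

import Mathlib

open MeasureTheory ProbabilityTheory
open scoped BigOperators RealInnerProductSpace Gradient

/-- The kernel assumption: `K` is a nonnegative, symmetric kernel integrating to one,
bounded, Lipschitz, positive at zero, and `x ↦ x * K x` is bounded, Lipschitz and
absolutely integrable. -/
structure IsGoodKernel (K : ℝ → ℝ) : Prop where
  nonneg : ∀ x, 0 ≤ K x
  symm : ∀ x, K x = K (-x)
  integral_one : (∫ x, K x) = 1
  bounded : ∃ B, ∀ x, |K x| ≤ B
  lipschitz : ∃ L : NNReal, LipschitzWith L K
  pos_at_zero : 0 < K 0
  bar_bounded : ∃ B, ∀ x, |x * K x| ≤ B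
  bar_lipschitz : ∃ L : NNReal, LipschitzWith L (fun x => x * K x)
  bar_integrable : Integrable (fun x => x * K x)

/-- The scaled kernel `K_δ(x) = (1/δ) K(x/δ)`. -/
noncomputable def scaledKernel (K : ℝ → ℝ) (δ : ℝ) (x : ℝ) : ℝ := (1 / δ) * K (x / δ)

/-- The convolution-type smoothed loss `l_δ(x) = ∫ |y| K_δ(x - y) dy`. -/
noncomputable def smoothedLoss (K : ℝ → ℝ) (δ : ℝ) (x : ℝ) : ℝ :=
  ∫ y, |y| * scaledKernel K δ (x - y)

/-- The smoothed empirical objective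
`F_δ(x) = (1/n) ∑ᵢ l_δ((aᵢᵀ x)² - bᵢ)`. -/
noncomputable def smoothedObj {p n : ℕ} (K : ℝ → ℝ) (δ : ℝ)
    (a : Fin n → EuclideanSpace ℝ (Fin p)) (b : Fin n → ℝ)
    (x : EuclideanSpace ℝ (Fin p)) : ℝ :=
  (n : ℝ)⁻¹ * ∑ i, smoothedLoss K δ ((⟪a i, x⟫) ^ 2 - b i)

/-- `Δ(x) = min(‖x - x⋆‖, ‖x + x⋆‖)`, the distance to the pair of true signals. -/
noncomputable def distSig {p : ℕ} (xs x : EuclideanSpace ℝ (Fin p)) : ℝ :=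
  min ‖x - xs‖ ‖x + xs‖

/-- The standard Gaussian measure `N(0, I_p)` on `EuclideanSpace ℝ (Fin p)`. -/
noncomputable def stdGaussian (p : ℕ) : Measure (EuclideanSpace ℝ (Fin p)) :=
  Measure.map (MeasurableEquiv.toLp 2 (Fin p → ℝ))
    (Measure.pi fun _ => gaussianReal 0 1)

/-- `a` is a family of i.i.d. standard Gaussian random vectors in `ℝ^p`. -/
def IsIIDStdGaussian {Ω : Type*} [MeasurableSpace Ω] (P : Measure Ω) {p : ℕ} {ι : Type*}
    (a : ι → Ω → EuclideanSpace ℝ (Fin p)) : Prop :=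
  (∀ i, Measurable (a i)) ∧
  iIndepFun a P ∧
  (∀ i, Measure.map (a i) P = stdGaussian p)



lemma grad_zero_of_even {E : Type*} [NormedAddCommGroup E] [InnerProductSpace ℝ E]
    [CompleteSpace E] (f : E → ℝ) (hf : ∀ x, f (-x) = f x) : ∇ f 0 = 0 := by
  by_cases h : DifferentiableAt ℝ f 0
  · set D := fderiv ℝ f 0 with hD
    have hneg : HasFDerivAt (fun x : E => -x) (-(ContinuousLinearMap.id ℝ E)) 0 :=
      (hasFDerivAt_id (0:E)).neg
    have hf0 : HasFDerivAt f D ((fun x : E => -x) 0) := by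
      simpa using h.hasFDerivAt
    have H : HasFDerivAt (f ∘ fun x : E => -x)
        (D.comp (-(ContinuousLinearMap.id ℝ E))) 0 := hf0.comp 0 hneg
    have hfe : (f ∘ fun x : E => -x) = f := funext fun x => hf x
    rw [hfe] at H
    have hDeq : D = D.comp (-(ContinuousLinearMap.id ℝ E)) := hD.trans H.fderiv
    have h0 : D = 0 := by
      ext v
      have := congrArg (fun L : E →L[ℝ] ℝ => L v) hDeq
      simp at this
      simp only [ContinuousLinearMap.zero_apply]
      linarith
    rw [gradient, ← hD, h0, map_zero]
  · exact gradient_eq_zero_of_not_differentiableAt h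

set_option maxHeartbeats 1000000 in
/-- Local gradient lower bound, noiseless case. If `F_δ` is `ρ`-weakly
convex and `λ_s`-generalized-sharp, then for `δ ≤ λ_s/ρ` the gradient inner products
with `x ∓ x⋆` are bounded below near `±x⋆`, and there is no stationary point with
`0 < Δ(x) ≤ λ_s/ρ`. -/
theorem local_gradient_lower_bound_noiseless
    {p n : ℕ} (xs : EuclideanSpace ℝ (Fin p))
    (K : ℝ → ℝ) (hK : IsGoodKernel K) (δ : ℝ) (hδ : 0 < δ)
    (a : Fin n → EuclideanSpace ℝ (Fin p)) (b : Fin n → ℝ)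
    (hb : ∀ i, b i = (⟪a i, xs⟫) ^ 2)
    (ρ lams : ℝ) (hρ : 0 < ρ) (hlams : 0 < lams)
    (hweak : ∀ x y : EuclideanSpace ℝ (Fin p),
      ⟪∇ (smoothedObj K δ a b) x, y - x⟫ - ρ / 2 * ‖y - x‖ ^ 2 ≤
        smoothedObj K δ a b y - smoothedObj K δ a b x)
    (hsharp : ∀ x : EuclideanSpace ℝ (Fin p),
      lams * min (distSig xs x) ((distSig xs x) ^ 2 / δ) ≤
        smoothedObj K δ a b x - smoothedObj K δ a b xs)
    (hδle : δ ≤ lams / ρ) :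
    (∀ x : EuclideanSpace ℝ (Fin p), ‖x - xs‖ ≤ lams / ρ →
      lams / 2 * min (distSig xs x) ((distSig xs x) ^ 2 / δ) ≤
        ⟪∇ (smoothedObj K δ a b) x, x - xs⟫) ∧
    (∀ x : EuclideanSpace ℝ (Fin p), ‖x + xs‖ ≤ lams / ρ →
      lams / 2 * min (distSig xs x) ((distSig xs x) ^ 2 / δ) ≤
        ⟪∇ (smoothedObj K δ a b) x, x + xs⟫) ∧
    (∀ x : EuclideanSpace ℝ (Fin p), 0 < distSig xs x → distSig xs x ≤ lams / ρ →
      ∇ (smoothedObj K δ a b) x ≠ 0) := by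
    classical
  set F := smoothedObj K δ a b with hF
  have heven : ∀ y, F (-y) = F y := by
    intro y
    simp [hF, smoothedObj, inner_neg_right]
  have hg0 : ∇ F 0 = 0 := grad_zero_of_even F heven
  have hρδ : ρ * δ ≤ lams := by
    have := (le_div_iff₀ hρ).mp hδle
    linarith
  -- dichotomy on ‖xs‖
  have hdich : xs = 0 ∨ 2 * (lams / ρ) ≤ ‖xs‖ := by
    by_cases hx0 : xs = 0
    · exact Or.inl hx0
    right
    have hs : 0 < ‖xs‖ := norm_pos_iff.mpr hx0
    set s := ‖xs‖ with hsdef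
    have h1 := hweak 0 xs
    rw [hg0] at h1
    simp only [inner_zero_left, zero_sub, norm_neg, zero_mul, sub_zero] at h1
    have hΔ0 : distSig xs 0 = s := by
      simp [distSig, hsdef]
    have h2 := hsharp 0
    rw [hΔ0] at h2
    -- F 0 - F xs ≤ ρ/2 * s^2  and  lams * min s (s²/δ) ≤ F 0 - F xs
    rcases le_total s δ with hc | hc
    · exfalso
      have hmin : min s (s^2/δ) = s^2/δ := min_eq_right (by
        rw [div_le_iff₀ hδ]; nlinarith)
      rw [hmin] at h2
      have hkey : lams * s^2 ≤ ρ/2 * s^2 * δ := by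
        have h3 : lams * (s^2/δ) ≤ ρ/2 * s^2 := by nlinarith
        calc lams * s^2 = lams * (s^2/δ) * δ := by field_simp
          _ ≤ ρ/2 * s^2 * δ := mul_le_mul_of_nonneg_right h3 hδ.le
      nlinarith [mul_pos hs hs, mul_pos hlams (mul_pos hs hs)]
    · have hmin : min s (s^2/δ) = s := min_eq_left (by
        rw [le_div_iff₀ hδ]; nlinarith)
      rw [hmin] at h2
      have hgoal : 2 * lams ≤ ρ * s := by nlinarith
      rw [show 2 * (lams / ρ) = 2 * lams / ρ by ring, div_le_iff₀ hρ]
      linarith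
  have hlρ : 0 ≤ lams / ρ := le_of_lt (div_pos hlams hρ)
  -- claim 1
  have claim1 : ∀ x : EuclideanSpace ℝ (Fin p), ‖x - xs‖ ≤ lams / ρ →
      lams / 2 * min (distSig xs x) ((distSig xs x) ^ 2 / δ) ≤ ⟪∇ F x, x - xs⟫ := by
    intro x hx
    set d := ‖x - xs‖ with hd
    have hd0 : 0 ≤ d := norm_nonneg _
    have hdle : distSig xs x = d := by
      apply min_eq_left
      rcases hdich with h0 | h0
      · subst h0; simp
      · have htri : ‖xs + xs‖ ≤ ‖x + xs‖ + ‖x - xs‖ := by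
          have hxx : xs + xs = (x + xs) - (x - xs) := by abel
          rw [hxx]; exact norm_sub_le _ _
        have h2s : ‖xs + xs‖ = 2 * ‖xs‖ := by
          rw [← two_smul ℝ xs, norm_smul]; simp
        have := htri
        rw [h2s] at this
        linarith
    have h1 := hweak x xs
    have h2 := hsharp x
    rw [hdle]
    rw [hdle] at h2
    set m := min d (d ^ 2 / δ) with hm
    have hinner : ⟪∇ F x, xs - x⟫ = -⟪∇ F x, x - xs⟫ := by
      rw [show xs - x = -(x - xs) by abel, inner_neg_right]
    rw [hinner, norm_sub_rev xs x] at h1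
    have hkey : ρ * d ^ 2 ≤ lams * m := by
      rcases le_total d δ with hc | hc
      · have hmin : m = d ^ 2 / δ := min_eq_right (by
          rw [div_le_iff₀ hδ]; nlinarith)
        rw [hmin]
        have hq : lams * (d ^ 2 / δ) = lams * d ^ 2 / δ := by ring
        rw [hq, le_div_iff₀ hδ]
        nlinarith [sq_nonneg d]
      · have hmin : m = d := min_eq_left (by
          rw [le_div_iff₀ hδ]; nlinarith)
        rw [hmin]
        have hρd : ρ * d ≤ lams := by
          have := (le_div_iff₀ hρ).mp hx
          linarith
        nlinarith
    linarith
  -- claim 2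
  have claim2 : ∀ x : EuclideanSpace ℝ (Fin p), ‖x + xs‖ ≤ lams / ρ →
      lams / 2 * min (distSig xs x) ((distSig xs x) ^ 2 / δ) ≤ ⟪∇ F x, x + xs⟫ := by
    intro x hx
    set d := ‖x + xs‖ with hd
    have hd0 : 0 ≤ d := norm_nonneg _
    have hdle : distSig xs x = d := by
      apply min_eq_right
      rcases hdich with h0 | h0
      · subst h0; simp
      · have htri : ‖xs + xs‖ ≤ ‖x + xs‖ + ‖x - xs‖ := by
          have hxx : xs + xs = (x + xs) - (x - xs) := by abel
          rw [hxx]; exact norm_sub_le _ _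
        have h2s : ‖xs + xs‖ = 2 * ‖xs‖ := by
          rw [← two_smul ℝ xs, norm_smul]; simp
        have := htri
        rw [h2s] at this
        linarith
    have h1 := hweak x (-xs)
    rw [heven xs] at h1
    have h2 := hsharp x
    rw [hdle]
    rw [hdle] at h2
    set m := min d (d ^ 2 / δ) with hm
    have hinner : ⟪∇ F x, -xs - x⟫ = -⟪∇ F x, x + xs⟫ := by
      rw [show -xs - x = -(x + xs) by abel, inner_neg_right]
    have hnorm : ‖-xs - x‖ = d := by
      rw [show -xs - x = -(x + xs) by abel, norm_neg]
    rw [hinner, hnorm] at h1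
    have hkey : ρ * d ^ 2 ≤ lams * m := by
      rcases le_total d δ with hc | hc
      · have hmin : m = d ^ 2 / δ := min_eq_right (by
          rw [div_le_iff₀ hδ]; nlinarith)
        rw [hmin]
        have hq : lams * (d ^ 2 / δ) = lams * d ^ 2 / δ := by ring
        rw [hq, le_div_iff₀ hδ]
        nlinarith [sq_nonneg d]
      · have hmin : m = d := min_eq_left (by
          rw [le_div_iff₀ hδ]; nlinarith)
        rw [hmin]
        have hρd : ρ * d ≤ lams := by
          have := (le_div_iff₀ hρ).mp hx
          linarith
        nlinarith
    linarith
  refine ⟨claim1, claim2, ?_⟩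
  intro x hpos hle hgrad
  have hmpos : 0 < min (distSig xs x) ((distSig xs x) ^ 2 / δ) :=
    lt_min hpos (div_pos (pow_pos hpos 2) hδ)
  have hlm : 0 < lams / 2 * min (distSig xs x) ((distSig xs x) ^ 2 / δ) :=
    mul_pos (by linarith) hmpos
  have hds : distSig xs x = min ‖x - xs‖ ‖x + xs‖ := rfl
  rcases min_cases ‖x - xs‖ ‖x + xs‖ with ⟨heq, _⟩ | ⟨heq, _⟩
  · have hxle : ‖x - xs‖ ≤ lams / ρ := by rw [hds, heq] at hle; exact hle
    have := claim1 x hxle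
    rw [hgrad, inner_zero_left] at this
    linarith
  · have hxle : ‖x + xs‖ ≤ lams / ρ := by rw [hds, heq] at hle; exact hle
    have := claim2 x hxle
    rw [hgrad, inner_zero_left] at this
    linarith
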